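/- Let a, b > 0, R > 0, c > 0, and γ ∈ ℝ, and set K = (1/2)·(1 + (R/c)·(a/(a+b+1) − γ)). Then the two inequalities I_{1/2}(a, b+1) ≤ K and I_{1/2}(a+1, b) ≥ K + R/(2c(a+b+1)) cannot both hold. -/
import Mathlib


open intervalIntegral

/-- The Beta function `B(a,b) = ∫_0^1 t^(a−1)(1−t)^(b−1) dt`. -/
noncomputable def betaFn (a b : ℝ) : ℝ :=
  ∫ t in (0:ℝ)..1, t ^ (a - 1) * (1 - t) ^ (b - 1)

/-- The regularized incomplete Beta function
`I_x(a,b) = (∫_0^x t^(a−1)(1−t)^(b−1) dt) / B(a,b)`. -/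
noncomputable def regIncBeta (x a b : ℝ) : ℝ :=
  (∫ t in (0:ℝ)..x, t ^ (a - 1) * (1 - t) ^ (b - 1)) / betaFn a b

section aux

variable {a b : ℝ}

lemma betaInt_left (ha : 0 < a) (hb : 0 < b) :
    IntervalIntegrable (fun t : ℝ => t ^ (a - 1) * (1 - t) ^ (b - 1))
      MeasureTheory.volume 0 (1/2) := by
  have h1 : IntervalIntegrable (fun t : ℝ => t ^ (a - 1)) MeasureTheory.volume 0 (1/2) :=
    intervalIntegrable_rpow' (by linarith)
  have h2 : ContinuousOn (fun t : ℝ => (1 - t) ^ (b - 1)) (Set.uIcc (0:ℝ) (1/2)) := by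
    apply ContinuousOn.rpow_const
    · exact (continuous_const.sub continuous_id).continuousOn
    · intro x hx
      left
      rw [Set.uIcc_of_le (by norm_num)] at hx
      have := hx.2
      intro h; nlinarith
  simpa [mul_comm] using h1.continuousOn_mul h2

lemma betaInt_right (ha : 0 < a) (hb : 0 < b) :
    IntervalIntegrable (fun t : ℝ => t ^ (a - 1) * (1 - t) ^ (b - 1))
      MeasureTheory.volume (1/2) 1 := by
  have h1 : IntervalIntegrable (fun t : ℝ => t ^ (b - 1)) MeasureTheory.volume 0 (1/2) :=
    intervalIntegrable_rpow' (by linarith)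
  have h1' : IntervalIntegrable (fun t : ℝ => (1 - t) ^ (b - 1))
      MeasureTheory.volume (1/2) 1 := by
    have := h1.comp_sub_left 1
    norm_num at this
    exact this.symm
  have h2 : ContinuousOn (fun t : ℝ => t ^ (a - 1)) (Set.uIcc (1/2 : ℝ) 1) := by
    apply ContinuousOn.rpow_const continuousOn_id
    intro x hx
    left
    rw [Set.uIcc_of_le (by norm_num)] at hx
    have := hx.1
    intro h; simp only [id_eq] at h; rw [h] at this; norm_num at this
  exact h1'.continuousOn_mul h2

lemma betaInt_full (ha : 0 < a) (hb : 0 < b) :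
    IntervalIntegrable (fun t : ℝ => t ^ (a - 1) * (1 - t) ^ (b - 1))
      MeasureTheory.volume 0 1 :=
  (betaInt_left ha hb).trans (betaInt_right ha hb)

lemma betaFn_pos (ha : 0 < a) (hb : 0 < b) : 0 < betaFn a b := by
  apply intervalIntegral_pos_of_pos_on (betaInt_full ha hb) _ (by norm_num)
  intro x hx
  have hx0 : 0 < x := hx.1
  have hx1 : 0 < 1 - x := by linarith [hx.2]
  positivity

/-- on `[0, 1/2]`, `t^a (1-t)^(b-1) ≤ t^(a-1) (1-t)^b`. -/
lemma ptwise_left (ha : 0 < a) (hb : 0 < b) {t : ℝ} (ht0 : 0 ≤ t) (ht2 : t ≤ 1/2) :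
    t ^ a * (1 - t) ^ (b - 1) ≤ t ^ (a - 1) * (1 - t) ^ b := by
  rcases eq_or_lt_of_le ht0 with h | h
  · rw [← h, Real.zero_rpow ha.ne']
    have : (0:ℝ) ≤ (0:ℝ) ^ (a - 1) * (1 - 0) ^ b := by positivity
    simpa using this
  · have h1t : 0 < 1 - t := by linarith
    have e1 : t ^ a = t ^ (a - 1) * t := by
      rw [← Real.rpow_add_one h.ne' (a - 1)]; norm_num
    have e2 : (1 - t) ^ b = (1 - t) ^ (b - 1) * (1 - t) := by
      rw [← Real.rpow_add_one h1t.ne' (b - 1)]; norm_num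
    rw [e1, e2]
    have hnn : 0 ≤ t ^ (a - 1) * (1 - t) ^ (b - 1) := by positivity
    calc t ^ (a - 1) * t * (1 - t) ^ (b - 1)
        = t ^ (a - 1) * (1 - t) ^ (b - 1) * t := by ring
      _ ≤ t ^ (a - 1) * (1 - t) ^ (b - 1) * (1 - t) := by
          exact mul_le_mul_of_nonneg_left (by linarith) hnn
      _ = t ^ (a - 1) * ((1 - t) ^ (b - 1) * (1 - t)) := by ring

/-- on `[1/2, 1]`, `t^(a-1) (1-t)^b ≤ t^a (1-t)^(b-1)`. -/
lemma ptwise_right (ha : 0 < a) (hb : 0 < b) {t : ℝ} (ht2 : 1/2 ≤ t) (ht1 : t ≤ 1) :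
    t ^ (a - 1) * (1 - t) ^ b ≤ t ^ a * (1 - t) ^ (b - 1) := by
  rcases eq_or_lt_of_le ht1 with h | h
  · rw [h]
    simp only [sub_self, Real.zero_rpow hb.ne', mul_zero]
    positivity
  · have h1t : 0 < 1 - t := by linarith
    have ht : 0 < t := by linarith
    have e1 : t ^ a = t ^ (a - 1) * t := by
      rw [← Real.rpow_add_one ht.ne' (a - 1)]; norm_num
    have e2 : (1 - t) ^ b = (1 - t) ^ (b - 1) * (1 - t) := by
      rw [← Real.rpow_add_one h1t.ne' (b - 1)]; norm_num
    rw [e1, e2]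
    have hnn : 0 ≤ t ^ (a - 1) * (1 - t) ^ (b - 1) := by positivity
    calc t ^ (a - 1) * ((1 - t) ^ (b - 1) * (1 - t))
        = t ^ (a - 1) * (1 - t) ^ (b - 1) * (1 - t) := by ring
      _ ≤ t ^ (a - 1) * (1 - t) ^ (b - 1) * t :=
          mul_le_mul_of_nonneg_left (by linarith) hnn
      _ = t ^ (a - 1) * t * (1 - t) ^ (b - 1) := by ring

/-- Key monotonicity: `I_{1/2}(a+1, b) ≤ I_{1/2}(a, b+1)`. -/
lemma key (ha : 0 < a) (hb : 0 < b) :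
    regIncBeta (1/2) (a + 1) b ≤ regIncBeta (1/2) a (b + 1) := by
  set F : ℝ → ℝ := fun t => t ^ (a - 1) * (1 - t) ^ (b + 1 - 1) with hF
  set G : ℝ → ℝ := fun t => t ^ (a + 1 - 1) * (1 - t) ^ (b - 1) with hG
  have hFa : (a : ℝ) - 1 = a - 1 := rfl
  have hFL : IntervalIntegrable F MeasureTheory.volume 0 (1/2) := betaInt_left ha (by linarith)
  have hFR : IntervalIntegrable F MeasureTheory.volume (1/2) 1 := betaInt_right ha (by linarith)
  have hGL : IntervalIntegrable G MeasureTheory.volume 0 (1/2) := betaInt_left (by linarith) hb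
  have hGR : IntervalIntegrable G MeasureTheory.volume (1/2) 1 := betaInt_right (by linarith) hb
  have hsimpF : ∀ t : ℝ, F t = t ^ (a - 1) * (1 - t) ^ b := by
    intro t; simp [hF]
  have hsimpG : ∀ t : ℝ, G t = t ^ a * (1 - t) ^ (b - 1) := by
    intro t; simp [hG]
  -- integrals
  set A := ∫ t in (0:ℝ)..(1/2), F t with hA
  set B1 := ∫ t in (1/2:ℝ)..1, F t with hB1
  set C := ∫ t in (0:ℝ)..(1/2), G t with hC
  set D := ∫ t in (1/2:ℝ)..1, G t with hD
  have hBF : betaFn a (b + 1) = A + B1 := by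
    rw [hA, hB1, betaFn, integral_add_adjacent_intervals hFL hFR]
  have hBG : betaFn (a + 1) b = C + D := by
    rw [hC, hD, betaFn, integral_add_adjacent_intervals hGL hGR]
  have hCA : C ≤ A := by
    apply integral_mono_on (by norm_num) hGL hFL
    intro x hx
    rw [hsimpF, hsimpG]
    exact ptwise_left ha hb hx.1 hx.2
  have hBD : B1 ≤ D := by
    apply integral_mono_on (by norm_num) hFR hGR
    intro x hx
    rw [hsimpF, hsimpG]
    exact ptwise_right ha hb hx.1 hx.2
  have hCnn : 0 ≤ C := by
    apply integral_nonneg (by norm_num)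
    intro x hx
    rw [hsimpG]
    have hx0 : (0:ℝ) ≤ x := hx.1
    have hx1 : 0 ≤ 1 - x := by linarith [hx.2]
    exact mul_nonneg (Real.rpow_nonneg hx0 _) (Real.rpow_nonneg hx1 _)
  have hB1nn : 0 ≤ B1 := by
    apply integral_nonneg (by norm_num)
    intro x hx
    rw [hsimpF]
    have hx0 : (0:ℝ) ≤ x := by linarith [hx.1]
    have hx1 : 0 ≤ 1 - x := by linarith [hx.2]
    exact mul_nonneg (Real.rpow_nonneg hx0 _) (Real.rpow_nonneg hx1 _)
  have hAnn : 0 ≤ A := le_trans hCnn hCA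
  have hBFpos : 0 < betaFn a (b + 1) := betaFn_pos ha (by linarith)
  have hBGpos : 0 < betaFn (a + 1) b := betaFn_pos (by linarith) hb
  have main : C * (A + B1) ≤ A * (C + D) := by
    have h1 : C * B1 ≤ A * D :=
      mul_le_mul hCA hBD hB1nn hAnn
    nlinarith
  have : regIncBeta (1/2) (a + 1) b = C / betaFn (a + 1) b := rfl
  rw [this]
  have : regIncBeta (1/2) a (b + 1) = A / betaFn a (b + 1) := rfl
  rw [this, div_le_div_iff₀ hBGpos hBFpos, hBF, hBG]
  exact main

end aux

/-- with `K = (1/2)(1 + (R/c)(a/(a+b+1) − γ))`, the inequalities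
`I_{1/2}(a, b+1) ≤ K` and `I_{1/2}(a+1, b) ≥ K + R/(2c(a+b+1))` are incompatible. -/
theorem case_one_three_incompatible (a b R c γ K : ℝ)
    (ha : 0 < a) (hb : 0 < b) (hR : 0 < R) (hc : 0 < c)
    (hK : K = (1/2) * (1 + (R/c) * (a / (a + b + 1) - γ))) :
    ¬ (regIncBeta (1/2) a (b + 1) ≤ K
        ∧ regIncBeta (1/2) (a + 1) b ≥ K + R / (2 * c * (a + b + 1))) := by
  rintro ⟨h1, h2⟩
  have hkey := key ha hb
  have hpos : 0 < R / (2 * c * (a + b + 1)) := by positivity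
  linarith
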